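/- Let L > 0 and consider f : ℝ → ℝ, f(x) = (L/2)x². For any x_0 ∈ ℝ, any N ≥ 1, and any stepsizes h = (h_0, …, h_{N−1}), the gradient descent iterates x_{i+1} = x_i − (h_i/L) f′(x_i) satisfy x_N = (Π_{i=0}^{N−1} (1 − h_i)) x_0. In particular, for k ≥ 1, N = 2^k − 1 and h = h_right^(k), the bound of the main theorem holds with equality: f(x_N) − min f = (L/2)x_0² / r_k. -/

import Mathlib

open Finset

/-- The silver ratio ρ = 1 + √2. -/
noncomputable def rho : ℝ := 1 + Real.sqrt 2

/-- Entry `i` of the silver stepsize schedule π^(k) ∈ ℝ^(2^k − 1) (0-indexed):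
π^(1) = [√2], π^(k+1) = [π^(k), β_k, π^(k)] where β_k = 1 + ρ^(k−1). -/
noncomputable def piSilver : ℕ → ℕ → ℝ
  | 0, _ => 0
  | 1, _ => Real.sqrt 2
  | k + 2, i =>
      if i < 2 ^ (k + 1) - 1 then piSilver (k + 1) i
      else if i = 2 ^ (k + 1) - 1 then 1 + rho ^ k
      else piSilver (k + 1) (i - 2 ^ (k + 1))

/-- The sequence r_k: r_1 = 4, r_{k+1} = (r_k + 4ρ^k + √(r_k(r_k + 8ρ^k)))/2. -/
noncomputable def rseq : ℕ → ℝ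
  | 0 => 0
  | 1 => 4
  | k + 2 =>
      (rseq (k + 1) + 4 * rho ^ (k + 1)
        + Real.sqrt (rseq (k + 1) * (rseq (k + 1) + 8 * rho ^ (k + 1)))) / 2

/-- α_k = 1 + (√(r_k(r_k + 8ρ^k)) − r_k)/4. -/
noncomputable def alphaSeq (k : ℕ) : ℝ :=
  1 + (Real.sqrt (rseq k * (rseq k + 8 * rho ^ k)) - rseq k) / 4

/-- Entry `i` of h_right^(k) ∈ ℝ^(2^k − 1) (0-indexed):
h_right^(1) = [3/2], h_right^(k+1) = [π^(k), α_k, h_right^(k)]. -/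
noncomputable def hright : ℕ → ℕ → ℝ
  | 0, _ => 0
  | 1, _ => 3 / 2
  | k + 2, i =>
      if i < 2 ^ (k + 1) - 1 then piSilver (k + 1) i
      else if i = 2 ^ (k + 1) - 1 then alphaSeq (k + 1)
      else hright (k + 1) (i - 2 ^ (k + 1))

/-- h_left^(k) is h_right^(k) with its entries reversed. -/
noncomputable def hleft (k i : ℕ) : ℝ := hright k (2 ^ k - 2 - i)

lemma rho_pos : 0 < rho := by
  have := Real.sqrt_nonneg 2; unfold rho; linarith

lemma rho_ne : (rho : ℝ) ≠ 0 := ne_of_gt rho_pos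

lemma rseq_pos : ∀ k, 1 ≤ k → 0 < rseq k := by
  intro k hk
  induction k with
  | zero => omega
  | succ n ih =>
    match n, ih with
    | 0, _ => norm_num [rseq]
    | m + 1, ih =>
      have h1 : 0 < rseq (m + 1) := ih (by omega)
      have h2 : 0 < rho ^ (m + 1) := pow_pos rho_pos _
      have h3 := Real.sqrt_nonneg (rseq (m + 1) * (rseq (m + 1) + 8 * rho ^ (m + 1)))
      show 0 < (rseq (m + 1) + 4 * rho ^ (m + 1) + Real.sqrt _) / 2
      positivity

lemma two_pow_split (k : ℕ) : 2 ^ (k + 1) - 1 = (2 ^ k - 1) + 1 + (2 ^ k - 1) := by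
  have : 1 ≤ 2 ^ k := Nat.one_le_two_pow
  omega

lemma prod_split (f : ℕ → ℝ) (N : ℕ) :
    ∏ i ∈ range (N + 1 + N), f i = (∏ i ∈ range N, f i) * f N * ∏ i ∈ range N, f (N + 1 + i) := by
  rw [Finset.prod_range_add, Finset.prod_range_succ]

lemma piSilver_prod : ∀ k, 1 ≤ k →
    (∏ i ∈ range (2 ^ k - 1), (1 - piSilver k i)) = -(1 / rho ^ k) := by
  intro k hk
  induction k with
  | zero => omega
  | succ n ih =>
    match n, ih with
    | 0, _ =>
      norm_num [piSilver]
      field_simp [rho_ne]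
      unfold rho; nlinarith [Real.sq_sqrt (show (0:ℝ) ≤ 2 by norm_num)]
    | m + 1, ih =>
      have IH := ih (by omega)
      set N := 2 ^ (m + 1) - 1 with hN
      have hNval : 2 ^ (m + 2) - 1 = N + 1 + N := two_pow_split (m + 1)
      have hN1 : N + 1 = 2 ^ (m + 1) := by
        have : 1 ≤ 2 ^ (m+1) := Nat.one_le_two_pow
        omega
      rw [hNval, prod_split]
      have e1 : ∀ i ∈ range N, (1 - piSilver (m + 2) i) = (1 - piSilver (m + 1) i) := by
        intro i hi
        rw [piSilver, if_pos (mem_range.mp hi)]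
      have e2 : piSilver (m + 2) N = 1 + rho ^ m := by
        rw [piSilver, if_neg (by omega), if_pos rfl]
      have e3 : ∀ i ∈ range N, (1 - piSilver (m + 2) (N + 1 + i)) = (1 - piSilver (m + 1) i) := by
        intro i hi
        have harg : N + 1 + i - 2 ^ (m + 1) = i := by omega
        rw [piSilver, if_neg (by omega), if_neg (by omega), harg]
      rw [Finset.prod_congr rfl e1, Finset.prod_congr rfl e3, e2, IH]
      field_simp [rho_ne]
      ring

lemma key_identity (m : ℕ) :
    (1 - alphaSeq (m + 1)) ^ 2 * rseq (m + 2) = (rho ^ (m + 1)) ^ 2 * rseq (m + 1) := by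
  have hr : 0 < rseq (m + 1) := rseq_pos _ (by omega)
  have hp : 0 < rho ^ (m + 1) := pow_pos rho_pos _
  set r := rseq (m + 1) with hrdef
  set p := rho ^ (m + 1) with hpdef
  have hs : 0 ≤ r * (r + 8 * p) := by positivity
  set t := Real.sqrt (r * (r + 8 * p)) with htdef
  have ht : t ^ 2 = r * (r + 8 * p) := Real.sq_sqrt hs
  have hrs : rseq (m + 2) = (r + 4 * p + t) / 2 := by rw [rseq]
  have ha : alphaSeq (m + 1) = 1 + (t - r) / 4 := by rw [alphaSeq]
  rw [hrs, ha]
  linear_combination ((t + 4 * p - r) / 32) * ht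

lemma hright_prod : ∀ k, 1 ≤ k →
    (∏ i ∈ range (2 ^ k - 1), (1 - hright k i)) ^ 2 * rseq k = 1 := by
  intro k hk
  induction k with
  | zero => omega
  | succ n ih =>
    match n, ih with
    | 0, _ => norm_num [hright, rseq]
    | m + 1, ih =>
      have IH := ih (by omega)
      set N := 2 ^ (m + 1) - 1 with hN
      have hNval : 2 ^ (m + 2) - 1 = N + 1 + N := two_pow_split (m + 1)
      have hN1 : N + 1 = 2 ^ (m + 1) := by
        have : 1 ≤ 2 ^ (m + 1) := Nat.one_le_two_pow
        omega
      rw [hNval, prod_split]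
      have e1 : ∀ i ∈ range N, (1 - hright (m + 2) i) = (1 - piSilver (m + 1) i) := by
        intro i hi
        rw [hright, if_pos (mem_range.mp hi)]
      have e2 : hright (m + 2) N = alphaSeq (m + 1) := by
        rw [hright, if_neg (by omega), if_pos rfl]
      have e3 : ∀ i ∈ range N, (1 - hright (m + 2) (N + 1 + i)) = (1 - hright (m + 1) i) := by
        intro i hi
        have harg : N + 1 + i - 2 ^ (m + 1) = i := by omega
        rw [hright, if_neg (by omega), if_neg (by omega), harg]
      rw [Finset.prod_congr rfl e1, Finset.prod_congr rfl e3, e2,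
        piSilver_prod (m + 1) (by omega)]
      have hkey := key_identity m
      have hp : (rho : ℝ) ^ (m + 1) ≠ 0 := pow_ne_zero _ rho_ne
      set Q := ∏ i ∈ range N, (1 - hright (m + 1) i)
      have : (-(1 / rho ^ (m + 1)) * (1 - alphaSeq (m + 1)) * Q) ^ 2 * rseq (m + 2)
          = (1 / (rho ^ (m + 1)) ^ 2) * ((1 - alphaSeq (m + 1)) ^ 2 * rseq (m + 2)) * Q ^ 2 := by
        ring
      rw [this, hkey]
      field_simp
      linarith [IH]

lemma deriv_quad (L t : ℝ) : deriv (fun y : ℝ => L / 2 * y ^ 2) t = L * t := by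
  have h : HasDerivAt (fun y : ℝ => L / 2 * y ^ 2) (L / 2 * (2 * t ^ 1)) t :=
    (hasDerivAt_pow 2 t).const_mul (L / 2)
  rw [h.deriv]; ring

lemma gd_iter (L : ℝ) (hL : 0 < L) (x0 : ℝ) (N : ℕ) (h : ℕ → ℝ) (x : ℕ → ℝ)
    (hx0 : x 0 = x0)
    (hrec : ∀ i < N, x (i + 1) = x i - (h i / L) * deriv (fun y : ℝ => L / 2 * y ^ 2) (x i)) :
    x N = (∏ i ∈ Finset.range N, (1 - h i)) * x0 := by
  induction N with
  | zero => simpa using hx0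
  | succ n ih =>
    have hn := ih (fun i hi => hrec i (by omega))
    have := hrec n (by omega)
    rw [deriv_quad] at this
    rw [this, hn, Finset.prod_range_succ]
    field_simp

/-- **Tightness on quadratics (objective gap).** For `f(x) = (L/2)x²`, gradient descent
iterates satisfy `x_N = (Π_{i<N} (1 − h_i)) x_0`; in particular, with `h = h_right^(k)`
and `N = 2^k − 1`, the main bound holds with equality:
`f(x_N) − min f = (L/2)x_0²/r_k` (the minimizer is `x⋆ = 0` with `min f = f(0) = 0`). -/
theorem quadratic_tightness_hright (L : ℝ) (hL : 0 < L) :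
    (∀ (x0 : ℝ) (N : ℕ) (h : ℕ → ℝ) (x : ℕ → ℝ),
      x 0 = x0 →
      (∀ i < N, x (i + 1) = x i - (h i / L) * deriv (fun y : ℝ => L / 2 * y ^ 2) (x i)) →
      x N = (∏ i ∈ Finset.range N, (1 - h i)) * x0) ∧
    (∀ (k : ℕ), 1 ≤ k → ∀ (x0 : ℝ) (x : ℕ → ℝ),
      x 0 = x0 →
      (∀ i < 2 ^ k - 1,
        x (i + 1) = x i - (hright k i / L) * deriv (fun y : ℝ => L / 2 * y ^ 2) (x i)) →
      (L / 2 * (x (2 ^ k - 1)) ^ 2) - (L / 2 * (0 : ℝ) ^ 2) = (L / 2) * x0 ^ 2 / rseq k) := by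
  constructor
  · exact fun x0 N h x hx0 hrec => gd_iter L hL x0 N h x hx0 hrec
  · intro k hk x0 x hx0 hrec
    have hx := gd_iter L hL x0 (2 ^ k - 1) (hright k) x hx0 hrec
    have hQ := hright_prod k hk
    have hr : 0 < rseq k := rseq_pos k hk
    rw [hx]
    have : ((∏ i ∈ Finset.range (2 ^ k - 1), (1 - hright k i)) * x0) ^ 2
        = (∏ i ∈ Finset.range (2 ^ k - 1), (1 - hright k i)) ^ 2 * x0 ^ 2 := by ring
    rw [this]
    field_simp
    linear_combination x0 ^ 2 * hQ
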